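/- If P is a polynomial in three variables with real coefficients such that P(e^x − 1, e^{x√2} − 1, e^{x√3} − 1) = 0 for all real x in some neighborhood of 0, then P is the zero polynomial. In other words, the functions e^x − 1, e^{x√2} − 1, e^{x√3} − 1 are algebraically independent over ℝ. -/

import Mathlib

open Real

private lemma irr3 : Irrational (Real.sqrt 3) := by
  have : Irrational (Real.sqrt ((3 : ℕ) : ℝ)) := Nat.prime_three.irrational_sqrt
  simpa using this

private lemma irr6 : Irrational (Real.sqrt 6) := by
  have : Irrational (Real.sqrt ((6 : ℕ) : ℝ)) := by
    refine irrational_sqrt_natCast_iff.mpr ?_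
    rintro ⟨r, hr⟩
    have : r ≤ 3 := by nlinarith
    interval_cases r <;> omega
  simpa using this

private lemma key_lin (a b c : ℤ) (h : (a : ℝ) + b * Real.sqrt 2 + c * Real.sqrt 3 = 0) :
    a = 0 ∧ b = 0 ∧ c = 0 := by
  have h2 : Real.sqrt 2 ^ 2 = 2 := Real.sq_sqrt (by norm_num)
  have h3 : Real.sqrt 3 ^ 2 = 3 := Real.sq_sqrt (by norm_num)
  have h6 : Real.sqrt 2 * Real.sqrt 3 = Real.sqrt 6 := by
    rw [← Real.sqrt_mul (by norm_num)]; norm_num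
  by_cases hbc : b * c = 0
  · rcases mul_eq_zero.mp hbc with hb | hc
    · subst hb
      have hc : c = 0 := by
        by_contra hc
        refine (irr3.intCast_mul hc).ne_int (-a) ?_
        push_cast at h ⊢
        linarith
      subst hc
      have ha : (a : ℝ) = 0 := by push_cast at h; linarith
      exact ⟨by exact_mod_cast ha, rfl, rfl⟩
    · subst hc
      have hb : b = 0 := by
        by_contra hb
        refine (irrational_sqrt_two.intCast_mul hb).ne_int (-a) ?_
        push_cast at h ⊢
        linarith
      subst hb
      have ha : (a : ℝ) = 0 := by push_cast at h; linarith
      exact ⟨by exact_mod_cast ha, rfl, rfl⟩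
  · exfalso
    have hsq : ((b : ℝ) * Real.sqrt 2 + c * Real.sqrt 3) ^ 2 = (a : ℝ) ^ 2 := by
      have : (b : ℝ) * Real.sqrt 2 + c * Real.sqrt 3 = -a := by linarith
      rw [this]; ring
    have hexp : ((2 * (b * c) : ℤ) : ℝ) * Real.sqrt 6 =
        ((a ^ 2 - 2 * b ^ 2 - 3 * c ^ 2 : ℤ) : ℝ) := by
      push_cast
      rw [← h6]
      nlinarith [hsq, h2, h3]
    exact (irr6.intCast_mul (by simpa using hbc)).ne_int _ hexp

private lemma aeval_eq_eval' (f : Fin 3 → ℝ) (p : MvPolynomial (Fin 3) ℝ) :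
    MvPolynomial.aeval f p = MvPolynomial.eval f p := by
  rw [MvPolynomial.aeval_def, Algebra.algebraMap_self]; rfl

private lemma aux (Q : MvPolynomial (Fin 3) ℝ) (ε : ℝ) (hε : 0 < ε)
    (h : ∀ x : ℝ, |x| < ε →
      MvPolynomial.eval ![exp x, exp (x * Real.sqrt 2), exp (x * Real.sqrt 3)] Q = 0) :
    Q = 0 := by
  set R : (Fin 3 →₀ ℕ) → ℝ :=
    fun m => (m 0 : ℝ) + m 1 * Real.sqrt 2 + m 2 * Real.sqrt 3 with hR
  have hinj : ∀ m m' : Fin 3 →₀ ℕ, R m = R m' → m = m' := by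
    intro m m' hm
    simp only [hR] at hm
    obtain ⟨h0, h1, h2⟩ := key_lin ((m 0 : ℤ) - m' 0) ((m 1 : ℤ) - m' 1) ((m 2 : ℤ) - m' 2)
      (by push_cast; linarith)
    have e0 : m 0 = m' 0 := by omega
    have e1 : m 1 = m' 1 := by omega
    have e2 : m 2 = m' 2 := by omega
    ext i
    fin_cases i
    · exact e0
    · exact e1
    · exact e2
  have hF : ∀ x : ℝ,
      MvPolynomial.eval ![exp x, exp (x * Real.sqrt 2), exp (x * Real.sqrt 3)] Q
      = ∑ m ∈ Q.support, Q.coeff m * exp (R m * x) := by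
    intro x
    rw [MvPolynomial.eval_eq']
    refine Finset.sum_congr rfl fun m _ => ?_
    congr 1
    rw [Fin.prod_univ_three]
    simp only [Matrix.cons_val_zero, Matrix.cons_val_one, Matrix.head_cons,
      Matrix.cons_val_two, Matrix.tail_cons]
    rw [← Real.exp_nat_mul, ← Real.exp_nat_mul, ← Real.exp_nat_mul,
      ← Real.exp_add, ← Real.exp_add]
    congr 1
    simp only [hR]
    ring
  have habs : ∀ x : ℝ, |x| < ε → ∀ᶠ y in nhds x, |y| < ε := by
    intro x hx
    exact (continuous_abs.continuousAt.tendsto).eventually_lt tendsto_const_nhds hx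
  have hG : ∀ k : ℕ, ∀ x : ℝ, |x| < ε →
      (∑ m ∈ Q.support, Q.coeff m * R m ^ k * exp (R m * x)) = 0 := by
    intro k
    induction k with
    | zero =>
      intro x hx
      have := h x hx
      rw [hF] at this
      simpa using this
    | succ k ih =>
      intro x hx
      have hd : HasDerivAt (fun y => ∑ m ∈ Q.support, Q.coeff m * R m ^ k * exp (R m * y))
          (∑ m ∈ Q.support, Q.coeff m * R m ^ (k + 1) * exp (R m * x)) x := by
        refine HasDerivAt.fun_sum fun m _ => ?_
        have h1 : HasDerivAt (fun y : ℝ => exp (R m * y)) (exp (R m * x) * (R m * 1)) x :=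
          ((hasDerivAt_id x).const_mul (R m)).exp
        have h2 := h1.const_mul (Q.coeff m * R m ^ k)
        convert h2 using 1
        · rfl
        ring
      have heq : (fun y => ∑ m ∈ Q.support, Q.coeff m * R m ^ k * exp (R m * y)) =ᶠ[nhds x]
          (fun _ => (0 : ℝ)) := (habs x hx).mono fun y hy => ih y hy
      have hz : HasDerivAt (fun y => ∑ m ∈ Q.support, Q.coeff m * R m ^ k * exp (R m * y))
          (0 : ℝ) x :=
        (hasDerivAt_const x (0 : ℝ)).congr_of_eventuallyEq heq
      exact hd.unique hz
  have hps : ∀ k : ℕ, (∑ m ∈ Q.support, Q.coeff m * R m ^ k) = 0 := by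
    intro k
    have := hG k 0 (by simpa using hε)
    simpa using this
  by_contra hQ
  obtain ⟨m0, hm0⟩ : ∃ m0, m0 ∈ Q.support := by
    rcases Finset.eq_empty_or_nonempty Q.support with he | ⟨m0, hm0⟩
    · exact absurd (MvPolynomial.support_eq_empty.mp he) hQ
    · exact ⟨m0, hm0⟩
  set p : Polynomial ℝ := ∏ m ∈ Q.support.erase m0, (Polynomial.X - Polynomial.C (R m)) with hp
  have hsum : (∑ m ∈ Q.support, Q.coeff m * p.eval (R m)) = 0 := by
    calc (∑ m ∈ Q.support, Q.coeff m * p.eval (R m))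
        = ∑ m ∈ Q.support, ∑ k ∈ Finset.range (p.natDegree + 1),
            p.coeff k * (Q.coeff m * R m ^ k) := by
          refine Finset.sum_congr rfl fun m _ => ?_
          rw [Polynomial.eval_eq_sum_range, Finset.mul_sum]
          exact Finset.sum_congr rfl fun k _ => by ring
      _ = ∑ k ∈ Finset.range (p.natDegree + 1),
            p.coeff k * ∑ m ∈ Q.support, Q.coeff m * R m ^ k := by
          rw [Finset.sum_comm]
          exact Finset.sum_congr rfl fun k _ => (Finset.mul_sum _ _ _).symm
      _ = 0 := by simp [hps]
  have heval0 : ∀ m ∈ Q.support, m ≠ m0 → Q.coeff m * p.eval (R m) = 0 := by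
    intro m hm hne
    have : p.eval (R m) = 0 := by
      rw [hp, Polynomial.eval_prod]
      exact Finset.prod_eq_zero (Finset.mem_erase.mpr ⟨hne, hm⟩) (by simp)
    simp [this]
  have hsingle : Q.coeff m0 * p.eval (R m0) = 0 :=
    (Finset.sum_eq_single_of_mem m0 hm0 heval0).symm.trans hsum
  have hpe : p.eval (R m0) ≠ 0 := by
    rw [hp, Polynomial.eval_prod]
    refine Finset.prod_ne_zero_iff.mpr fun m hm => ?_
    simp only [Polynomial.eval_sub, Polynomial.eval_X, Polynomial.eval_C]
    intro hc
    have hRm : R m0 = R m := by linarith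
    exact (Finset.mem_erase.mp hm).1 (hinj m m0 hRm.symm)
  have : Q.coeff m0 = 0 := by
    rcases mul_eq_zero.mp hsingle with h | h
    · exact h
    · exact absurd h hpe
  exact (MvPolynomial.mem_support_iff.mp hm0) this

theorem stmt1 (P : MvPolynomial (Fin 3) ℝ) (ε : ℝ) (hε : 0 < ε)
    (h : ∀ x : ℝ, |x| < ε →
      MvPolynomial.eval
        ![exp x - 1, exp (x * Real.sqrt 2) - 1, exp (x * Real.sqrt 3) - 1] P = 0) :
    P = 0 := by
  have hQ : MvPolynomial.bind₁ (fun i => MvPolynomial.X i - 1) P = 0 := by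
    apply aux _ ε hε
    intro x hx
    rw [← aeval_eq_eval', MvPolynomial.aeval_bind₁]
    have hv : (fun i : Fin 3 => MvPolynomial.aeval
        ![exp x, exp (x * Real.sqrt 2), exp (x * Real.sqrt 3)]
        (MvPolynomial.X i - (1 : MvPolynomial (Fin 3) ℝ)))
        = ![exp x - 1, exp (x * Real.sqrt 2) - 1, exp (x * Real.sqrt 3) - 1] := by
      funext i
      fin_cases i <;> simp
    rw [hv, aeval_eq_eval']
    exact h x hx
  have h2 := congrArg (MvPolynomial.bind₁ fun i : Fin 3 => MvPolynomial.X i + 1) hQ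
  rw [MvPolynomial.bind₁_bind₁, map_zero] at h2
  simp only [map_sub, MvPolynomial.bind₁_X_right, map_one, add_sub_cancel_right] at h2
  rwa [show (fun i : Fin 3 => MvPolynomial.X i)
      = (MvPolynomial.X : Fin 3 → MvPolynomial (Fin 3) ℝ) from rfl,
    MvPolynomial.bind₁_X_left, AlgHom.id_apply] at h2
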